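/- Let Ω ⊆ ℝ² be a measurable set of finite Lebesgue measure m, let U : ℝ² → ℝ be measurable with 0 ≤ U ≤ 1 a.e. and U = 0 a.e. outside Ω, let H, G ∈ L²(ℝ²; ℂ), let a > 0, tr ∈ ℝ, and let I : ℝ² → ℝ be measurable with |I| ≤ B a.e. on Ω for some B ≥ 0. Then ∫_Ω | (Sig_a(|(H∗U)(x)|²) − I(x))² − (Sig_a(|(G∗U)(x)|²) − I(x))² | dx ≤ (a/2)·(1 + B)·m²·(‖H‖_{L²} + ‖G‖_{L²})·‖H − G‖_{L²}. In particular the data-misfit functional ‖Sig_a(|H∗U|²) − I‖²_{L²(Ω)} depends Lipschitz-continuously on the convolution kernel H. -/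

import Mathlib

open MeasureTheory ENNReal NNReal

/-- The sigmoid function `Sig_a(x) = 1/(1 + exp(-a(x - tr)))`. -/
noncomputable def Sig (a tr x : ℝ) : ℝ := 1 / (1 + Real.exp (-a * (x - tr)))

/-- Convolution `(H ∗ U)(x) = ∫ H(y) U(x − y) dy` of an `L²` kernel `H : ℝ² → ℂ`
with a real-valued mask `U`. -/
noncomputable def conv2 (H : EuclideanSpace ℝ (Fin 2) → ℂ)
    (U : EuclideanSpace ℝ (Fin 2) → ℝ) (x : EuclideanSpace ℝ (Fin 2)) : ℂ :=
  ∫ y, H y * (U (x - y) : ℂ)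

lemma sig_pos_denom (a tr x : ℝ) : (0:ℝ) < 1 + Real.exp (-a * (x - tr)) := by
  positivity

lemma sig_nonneg (a tr x : ℝ) : 0 ≤ Sig a tr x := by
  unfold Sig; positivity

lemma sig_le_one (a tr x : ℝ) : Sig a tr x ≤ 1 := by
  unfold Sig
  rw [div_le_one (sig_pos_denom a tr x)]
  nlinarith [Real.exp_pos (-a * (x - tr))]

lemma sig_hasDeriv (a tr x : ℝ) :
    HasDerivAt (Sig a tr)
      (a * Real.exp (-a * (x - tr)) / (1 + Real.exp (-a * (x - tr))) ^ 2) x := by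
  have h1 : HasDerivAt (fun x : ℝ => -a * (x - tr)) (-a) x := by
    simpa using ((hasDerivAt_id x).sub_const tr).const_mul (-a)
  have h2 := h1.exp
  have h3 := h2.const_add 1
  have h4 := h3.inv (ne_of_gt (sig_pos_denom a tr x))
  have : Sig a tr = fun x => (1 + Real.exp (-a * (x - tr)))⁻¹ := by
    funext y; simp [Sig, one_div]
  rw [this]
  exact h4.congr_deriv (by ring)

lemma sig_lip (a tr : ℝ) (ha : 0 < a) (s t : ℝ) :
    |Sig a tr s - Sig a tr t| ≤ a / 4 * |s - t| := by
  have key : ∀ x : ℝ,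
      ‖a * Real.exp (-a * (x - tr)) / (1 + Real.exp (-a * (x - tr))) ^ 2‖ ≤ a / 4 := by
    intro x
    have he := Real.exp_pos (-a * (x - tr))
    rw [Real.norm_eq_abs, abs_of_nonneg (by positivity)]
    rw [div_le_iff₀ (by positivity)]
    nlinarith [sq_nonneg (1 - Real.exp (-a * (x - tr)))]
  have := Convex.norm_image_sub_le_of_norm_hasDerivWithin_le
    (f := Sig a tr)
    (f' := fun x => a * Real.exp (-a * (x - tr)) / (1 + Real.exp (-a * (x - tr))) ^ 2)
    (fun x _ => (sig_hasDeriv a tr x).hasDerivWithinAt) (fun x _ => key x)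
    convex_univ (Set.mem_univ t) (Set.mem_univ s)
  simpa [Real.norm_eq_abs] using this

section ConvBounds

variable {Ω : Set (EuclideanSpace ℝ (Fin 2))}
  {U : EuclideanSpace ℝ (Fin 2) → ℝ} {H : EuclideanSpace ℝ (Fin 2) → ℂ}

lemma holder_bound (hΩmeas : MeasurableSet Ω)
    (hUmeas : Measurable U)
    (hU01 : ∀ᵐ x, 0 ≤ U x ∧ U x ≤ 1)
    (hUsupp : ∀ᵐ x, x ∉ Ω → U x = 0)
    (hH : AEStronglyMeasurable H volume) (x : EuclideanSpace ℝ (Fin 2)) :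
    ∫⁻ y, ‖H y‖₊ * ‖U (x - y)‖₊ ∂volume ≤
      eLpNorm H 2 volume * (volume Ω) ^ (1/2 : ℝ) := by
  have hpq : Real.HolderConjugate 2 2 := Real.HolderConjugate.two_two
  have hf : AEMeasurable (fun y => (‖H y‖₊ : ℝ≥0∞)) volume := hH.enorm
  have hg : AEMeasurable (fun y => (‖U (x - y)‖₊ : ℝ≥0∞)) volume := by
    exact ((hUmeas.comp (measurable_const.sub measurable_id)).nnnorm.coe_nnreal_ennreal).aemeasurable
  have h := ENNReal.lintegral_mul_le_Lp_mul_Lq volume hpq hf hg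
  simp only [Pi.mul_apply] at h
  refine h.trans ?_
  have hHnorm : (∫⁻ y, (‖H y‖₊ : ℝ≥0∞) ^ (2:ℝ) ∂volume) ^ (1/2 : ℝ) = eLpNorm H 2 volume := by
    rw [eLpNorm_eq_lintegral_rpow_enorm_toReal (by norm_num) (by norm_num)]
    norm_num [enorm_eq_nnnorm]
  have hUnorm : (∫⁻ y, (‖U (x - y)‖₊ : ℝ≥0∞) ^ (2:ℝ) ∂volume) ≤ volume Ω := by
    have hmp : MeasurePreserving (fun y : EuclideanSpace ℝ (Fin 2) => x - y)
        volume volume := Measure.measurePreserving_sub_left volume x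
    have : (∫⁻ y, (‖U (x - y)‖₊ : ℝ≥0∞) ^ (2:ℝ) ∂volume)
        = ∫⁻ z, (‖U z‖₊ : ℝ≥0∞) ^ (2:ℝ) ∂volume :=
      hmp.lintegral_comp ((hUmeas.nnnorm.coe_nnreal_ennreal).pow_const (2:ℝ))
    rw [this]
    have hb : ∀ᵐ z, (‖U z‖₊ : ℝ≥0∞) ^ (2:ℝ) ≤ Ω.indicator 1 z := by
      filter_upwards [hU01, hUsupp] with z h01 hs
      by_cases hz : z ∈ Ω
      · simp only [Set.indicator_of_mem hz]
        have : ‖U z‖₊ ≤ 1 := by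
          rw [← NNReal.coe_le_coe, coe_nnnorm, NNReal.coe_one, Real.norm_eq_abs]
          exact abs_le.2 ⟨by linarith [h01.1], h01.2⟩
        calc (‖U z‖₊ : ℝ≥0∞) ^ (2:ℝ) ≤ (1:ℝ≥0∞) ^ (2:ℝ) := by
              gcongr
              exact_mod_cast this
          _ = 1 := by norm_num
        
      · simp [Set.indicator_of_notMem hz, hs hz]
    calc ∫⁻ z, (‖U z‖₊ : ℝ≥0∞) ^ (2:ℝ) ∂volume ≤ ∫⁻ z, Ω.indicator 1 z ∂volume :=
          lintegral_mono_ae hb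
      _ = volume Ω := lintegral_indicator_one hΩmeas
  rw [hHnorm]
  gcongr

lemma conv_integrable (hΩmeas : MeasurableSet Ω) (hΩfin : volume Ω < ⊤)
    (hUmeas : Measurable U)
    (hU01 : ∀ᵐ x, 0 ≤ U x ∧ U x ≤ 1)
    (hUsupp : ∀ᵐ x, x ∉ Ω → U x = 0)
    (hH : MemLp H 2 volume) (x : EuclideanSpace ℝ (Fin 2)) :
    Integrable (fun y => H y * (U (x - y) : ℂ)) volume := by
  constructor
  · exact hH.aestronglyMeasurable.mul
      ((Complex.measurable_ofReal.comp
        (hUmeas.comp (measurable_const.sub measurable_id))).aestronglyMeasurable)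
  · have hb := holder_bound hΩmeas hUmeas hU01 hUsupp hH.aestronglyMeasurable x
    have heq : (∫⁻ y, ‖H y * (U (x - y) : ℂ)‖₊ ∂volume)
        = ∫⁻ y, ‖H y‖₊ * ‖U (x - y)‖₊ ∂volume := by
      congr 1; funext y
      rw [nnnorm_mul, Complex.nnnorm_real]
      push_cast
      ring
    refine lt_of_le_of_lt (le_of_eq heq) (lt_of_le_of_lt hb ?_)
    exact ENNReal.mul_lt_top hH.eLpNorm_lt_top (ENNReal.rpow_lt_top_of_nonneg (by norm_num) hΩfin.ne)

lemma conv_norm_le (hΩmeas : MeasurableSet Ω) (hΩfin : volume Ω < ⊤)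
    (hUmeas : Measurable U)
    (hU01 : ∀ᵐ x, 0 ≤ U x ∧ U x ≤ 1)
    (hUsupp : ∀ᵐ x, x ∉ Ω → U x = 0)
    (hH : MemLp H 2 volume) (x : EuclideanSpace ℝ (Fin 2)) :
    ‖conv2 H U x‖ ≤ (eLpNorm H 2 volume).toReal * Real.sqrt (volume Ω).toReal := by
  have h1 := norm_integral_le_lintegral_norm (μ := volume) (fun y => H y * (U (x - y) : ℂ))
  simp_rw [ofReal_norm, enorm_eq_nnnorm] at h1
  have heq : (∫⁻ y, (‖H y * (U (x - y) : ℂ)‖₊ : ℝ≥0∞) ∂volume)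
      = ∫⁻ y, ‖H y‖₊ * ‖U (x - y)‖₊ ∂volume := by
    congr 1; funext y
    rw [nnnorm_mul, Complex.nnnorm_real]
    push_cast
    ring
  rw [heq] at h1
  refine h1.trans ?_
  have hb := holder_bound hΩmeas hUmeas hU01 hUsupp hH.aestronglyMeasurable x
  have hfin : eLpNorm H 2 volume * (volume Ω) ^ (1/2 : ℝ) ≠ ⊤ :=
    (ENNReal.mul_lt_top hH.eLpNorm_lt_top
      (ENNReal.rpow_lt_top_of_nonneg (by norm_num) hΩfin.ne)).ne
  calc (∫⁻ y, ‖H y‖₊ * ‖U (x - y)‖₊ ∂volume).toReal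
      ≤ (eLpNorm H 2 volume * (volume Ω) ^ (1/2 : ℝ)).toReal := ENNReal.toReal_mono hfin hb
    _ = (eLpNorm H 2 volume).toReal * Real.sqrt (volume Ω).toReal := by
        rw [ENNReal.toReal_mul, ← ENNReal.toReal_rpow, Real.sqrt_eq_rpow]

end ConvBounds
theorem misfit_lipschitz_in_kernel (Ω : Set (EuclideanSpace ℝ (Fin 2)))
    (hΩmeas : MeasurableSet Ω) (hΩfin : volume Ω < ⊤)
    (U : EuclideanSpace ℝ (Fin 2) → ℝ) (hUmeas : Measurable U)
    (hU01 : ∀ᵐ x, 0 ≤ U x ∧ U x ≤ 1)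
    (hUsupp : ∀ᵐ x, x ∉ Ω → U x = 0)
    (H G : EuclideanSpace ℝ (Fin 2) → ℂ)
    (hH : MemLp H 2 volume) (hG : MemLp G 2 volume)
    (a tr : ℝ) (ha : 0 < a)
    (I : EuclideanSpace ℝ (Fin 2) → ℝ) (hImeas : Measurable I)
    (B : ℝ) (hB : 0 ≤ B) (hIbd : ∀ᵐ x, x ∈ Ω → |I x| ≤ B) :
    ∫ x in Ω,
        |(Sig a tr (‖conv2 H U x‖ ^ 2) - I x) ^ 2 -
          (Sig a tr (‖conv2 G U x‖ ^ 2) - I x) ^ 2| ≤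
      (a / 2) * (1 + B) * (volume Ω).toReal ^ 2 *
        ((eLpNorm H 2 volume).toReal + (eLpNorm G 2 volume).toReal) *
          (eLpNorm (H - G) 2 volume).toReal := by
  have hHG : MemLp (H - G) 2 volume := hH.sub hG
  set m : ℝ := (volume Ω).toReal with hm
  have hm0 : 0 ≤ m := ENNReal.toReal_nonneg
  set s : ℝ := Real.sqrt m with hsdef
  have hs0 : 0 ≤ s := Real.sqrt_nonneg m
  have hss : s * s = m := Real.mul_self_sqrt hm0
  set nH : ℝ := (eLpNorm H 2 volume).toReal with hnH
  set nG : ℝ := (eLpNorm G 2 volume).toReal with hnG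
  set nD : ℝ := (eLpNorm (H - G) 2 volume).toReal with hnD
  have hnH0 : 0 ≤ nH := ENNReal.toReal_nonneg
  have hnG0 : 0 ≤ nG := ENNReal.toReal_nonneg
  have hnD0 : 0 ≤ nD := ENNReal.toReal_nonneg
  set C : ℝ := a / 4 * (nD * s * ((nH + nG) * s)) * (2 * (1 + B)) with hC
  -- pointwise bound
  have key : ∀ᵐ x, x ∈ Ω →
      ‖|(Sig a tr (‖conv2 H U x‖ ^ 2) - I x) ^ 2 -
          (Sig a tr (‖conv2 G U x‖ ^ 2) - I x) ^ 2|‖ ≤ C := by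
    filter_upwards [hIbd] with x hIx hxΩ
    have hIB := hIx hxΩ
    set u := conv2 H U x with hu
    set v := conv2 G U x with hv
    set p := Sig a tr (‖u‖ ^ 2) with hp
    set q := Sig a tr (‖v‖ ^ 2) with hq
    have hub : ‖u‖ ≤ nH * s := conv_norm_le hΩmeas hΩfin hUmeas hU01 hUsupp hH x
    have hvb : ‖v‖ ≤ nG * s := conv_norm_le hΩmeas hΩfin hUmeas hU01 hUsupp hG x
    have hdiff : u - v = conv2 (H - G) U x := by
      rw [hu, hv]
      unfold conv2
      rw [← integral_sub (conv_integrable hΩmeas hΩfin hUmeas hU01 hUsupp hH x)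
        (conv_integrable hΩmeas hΩfin hUmeas hU01 hUsupp hG x)]
      congr 1
      funext y
      simp [sub_mul]
    have huvb : ‖u - v‖ ≤ nD * s := by
      rw [hdiff]; exact conv_norm_le hΩmeas hΩfin hUmeas hU01 hUsupp hHG x
    have hnu : 0 ≤ ‖u‖ := norm_nonneg u
    have hnv : 0 ≤ ‖v‖ := norm_nonneg v
    -- |‖u‖² − ‖v‖²| ≤ ‖u−v‖ (‖u‖+‖v‖)
    have hsq : |‖u‖ ^ 2 - ‖v‖ ^ 2| ≤ ‖u - v‖ * (‖u‖ + ‖v‖) := by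
      have h1 : ‖u‖ ^ 2 - ‖v‖ ^ 2 = (‖u‖ - ‖v‖) * (‖u‖ + ‖v‖) := by ring
      rw [h1, abs_mul, abs_of_nonneg (add_nonneg hnu hnv)]
      exact mul_le_mul_of_nonneg_right (abs_norm_sub_norm_le u v) (add_nonneg hnu hnv)
    have hA1 : |p - q| ≤ a / 4 * (nD * s * ((nH + nG) * s)) := by
      refine (sig_lip a tr ha _ _).trans ?_
      have : ‖u - v‖ * (‖u‖ + ‖v‖) ≤ nD * s * ((nH + nG) * s) := by
        have h2 : (‖u‖ + ‖v‖) ≤ nH * s + nG * s := add_le_add hub hvb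
        calc ‖u - v‖ * (‖u‖ + ‖v‖) ≤ (nD * s) * (nH * s + nG * s) :=
              mul_le_mul huvb h2 (by positivity) (by positivity)
          _ = nD * s * ((nH + nG) * s) := by ring
      have := hsq.trans this
      nlinarith [abs_nonneg (‖u‖ ^ 2 - ‖v‖ ^ 2)]
    have hA2 : |p + q - 2 * I x| ≤ 2 * (1 + B) := by
      have h1 : |p| ≤ 1 := abs_le.2 ⟨by linarith [sig_nonneg a tr (‖u‖ ^ 2)],
        sig_le_one a tr (‖u‖ ^ 2)⟩
      have h2 : |q| ≤ 1 := abs_le.2 ⟨by linarith [sig_nonneg a tr (‖v‖ ^ 2)],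
        sig_le_one a tr (‖v‖ ^ 2)⟩
      calc |p + q - 2 * I x| ≤ |p| + |q| + 2 * |I x| := by
            have := abs_add_le (p + q) (-(2 * I x))
            have h3 := abs_add_le p q
            simp only [abs_neg] at this
            calc |p + q - 2 * I x| = |(p + q) + -(2 * I x)| := by ring_nf
              _ ≤ |p + q| + |2 * I x| := by simpa using this
              _ ≤ |p| + |q| + 2 * |I x| := by
                  rw [abs_mul]
                  simp only [abs_two]
                  linarith
        _ ≤ 2 * (1 + B) := by linarith
    have hfact : (p - I x) ^ 2 - (q - I x) ^ 2 = (p - q) * (p + q - 2 * I x) := by ring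
    rw [Real.norm_eq_abs, abs_abs, hfact, abs_mul, hC]
    exact mul_le_mul hA1 hA2 (abs_nonneg _) (by positivity)
  have hint : ∫ x in Ω,
      |(Sig a tr (‖conv2 H U x‖ ^ 2) - I x) ^ 2 -
        (Sig a tr (‖conv2 G U x‖ ^ 2) - I x) ^ 2| ≤ C * m := by
    refine le_trans (le_abs_self _) ?_
    rw [← Real.norm_eq_abs]
    exact norm_setIntegral_le_of_norm_le_const_ae' hΩfin key
  refine hint.trans (le_of_eq ?_)
  rw [hC]
  linear_combination (a / 2 * (1 + B) * nD * (nH + nG) * m) * hss
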